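/- Let (X,d) be a suprametric space with constant ρ ≥ 0 and let (x_k) be a sequence in X. Then for all n ≥ 0 and p ≥ 1, 1 + ρ·d(x_n, x_{n+p}) ≤ ∏_{k=n}^{n+p-1} (1 + ρ·d(x_k, x_{k+1})). -/

import Mathlib

open Filter Topology

structure IsSuprametric {X : Type*} (d : X → X → ℝ) (ρ : ℝ) : Prop where
  nonneg : ∀ x y, 0 ≤ d x y
  eq_zero_iff : ∀ x y, d x y = 0 ↔ x = y
  symm : ∀ x y, d x y = d y x
  triangle : ∀ x y z, d x y ≤ d x z + d z y + ρ * d x z * d z y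

def IsCauchySeq {X : Type*} (d : X → X → ℝ) (x : ℕ → X) : Prop :=
  ∀ ε > 0, ∃ N, ∀ m ≥ N, ∀ n ≥ N, d (x m) (x n) < ε

def ConvergesTo {X : Type*} (d : X → X → ℝ) (x : ℕ → X) (z : X) : Prop :=
  Tendsto (fun n => d (x n) z) atTop (𝓝 0)

def IsCompleteSupra {X : Type*} (d : X → X → ℝ) : Prop :=
  ∀ x : ℕ → X, IsCauchySeq d x → ∃ z, ConvergesTo d x z

theorem stmt1 {X : Type*} (d : X → X → ℝ) (ρ : ℝ) (hρ : 0 ≤ ρ)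
    (hd : IsSuprametric d ρ) (x : ℕ → X) :
    ∀ n p : ℕ, 1 ≤ p →
      1 + ρ * d (x n) (x (n + p)) ≤
        ∏ k ∈ Finset.Ico n (n + p), (1 + ρ * d (x k) (x (k + 1))) := by
  intro n p hp
  induction p with
  | zero => omega
  | succ q ih =>
    rcases Nat.eq_zero_or_pos q with hq | hq
    · subst hq
      simp
    · have h1 := ih hq
      have key : 1 + ρ * d (x n) (x (n + (q+1))) ≤
          (1 + ρ * d (x n) (x (n + q))) * (1 + ρ * d (x (n + q)) (x (n + q + 1))) := by
        have ht := hd.triangle (x n) (x (n + (q+1))) (x (n + q))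
        have : n + q + 1 = n + (q + 1) := by omega
        rw [this] at *
        nlinarith [hd.nonneg (x n) (x (n+q)), hd.nonneg (x (n+q)) (x (n+(q+1)))]
      have hprod : ∏ k ∈ Finset.Ico n (n + (q+1)), (1 + ρ * d (x k) (x (k + 1))) =
          (∏ k ∈ Finset.Ico n (n + q), (1 + ρ * d (x k) (x (k + 1)))) *
            (1 + ρ * d (x (n + q)) (x (n + q + 1))) := by
        rw [show n + (q+1) = (n+q) + 1 by omega, Finset.prod_Ico_succ_top (by omega)]
      rw [hprod]
      have hfac : 0 ≤ 1 + ρ * d (x (n + q)) (x (n + q + 1)) := by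
        nlinarith [hd.nonneg (x (n+q)) (x (n+q+1))]
      calc 1 + ρ * d (x n) (x (n + (q+1)))
          ≤ (1 + ρ * d (x n) (x (n + q))) * (1 + ρ * d (x (n + q)) (x (n + q + 1))) := key
        _ ≤ _ := by apply mul_le_mul_of_nonneg_right h1 hfac
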